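/- For every real α > 0 and all real x, y with -1 ≤ y ≤ x ≤ 1, the Green function identity for killed Brownian motion on (-1,1) holds: sinh((1-x)·√(2α)) · sinh((1+y)·√(2α)) / ( √(2α) · sinh(2·√(2α)) ) = (1/2) · ∑_{n=1}^∞ (1/(α + n²π²/8)) · sin(nπ(x+1)/2) · sin(nπ(y+1)/2). -/

import Mathlib

open Real intervalIntegral


lemma expand_cosh (s β : ℂ) (t : ℝ) :
    Complex.exp (β * t) * Complex.cosh (s * (2 - t)) =
      (Complex.exp (2*s) / 2) * Complex.exp ((β - s) * t)
      + (Complex.exp (-(2*s)) / 2) * Complex.exp ((β + s) * t) := by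
  rw [show Complex.cosh (s*(2-(t:ℂ))) = (Complex.exp (s*(2-t)) + Complex.exp (-(s*(2-t))))/2 from
      by rw [← Complex.two_cosh]; ring]
  rw [mul_div_assoc', mul_add, ← Complex.exp_add, ← Complex.exp_add,
    div_mul_eq_mul_div, div_mul_eq_mul_div, ← Complex.exp_add, ← Complex.exp_add,
    show (β*t + s*(2-t) : ℂ) = 2*s + (β-s)*t by ring,
    show (β*t + -(s*(2-t)) : ℂ) = -(2*s) + (β+s)*t by ring]
  ring

lemma expand_cosh' (s β : ℂ) (t : ℝ) :
    Complex.exp (β * t) * Complex.cosh (s * (2 + t)) =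
      (Complex.exp (2*s) / 2) * Complex.exp ((β + s) * t)
      + (Complex.exp (-(2*s)) / 2) * Complex.exp ((β - s) * t) := by
  rw [show Complex.cosh (s*(2+(t:ℂ))) = (Complex.exp (s*(2+t)) + Complex.exp (-(s*(2+t))))/2 from
      by rw [← Complex.two_cosh]; ring]
  rw [mul_div_assoc', mul_add, ← Complex.exp_add, ← Complex.exp_add,
    div_mul_eq_mul_div, div_mul_eq_mul_div, ← Complex.exp_add, ← Complex.exp_add,
    show (β*t + s*(2+t) : ℂ) = 2*s + (β+s)*t by ring,
    show (β*t + -(s*(2+t)) : ℂ) = -(2*s) + (β-s)*t by ring]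
  ring

lemma expand_abs_neg (s : ℝ) (β : ℂ) (t : ℝ) (ht : t ≤ 0) :
    Complex.exp (β * t) * (Real.cosh (s * (2 - |t|)) : ℂ) =
      (Complex.exp (2*(s:ℂ)) / 2) * Complex.exp ((β + s) * t)
      + (Complex.exp (-(2*(s:ℂ))) / 2) * Complex.exp ((β - s) * t) := by
  rw [abs_of_nonpos ht, Complex.ofReal_cosh,
    show ((s * (2 - -t) : ℝ) : ℂ) = (s:ℂ) * (2 + (t:ℝ)) by push_cast; ring]
  exact expand_cosh' s β t

lemma expand_abs_pos (s : ℝ) (β : ℂ) (t : ℝ) (ht : 0 ≤ t) :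
    Complex.exp (β * t) * (Real.cosh (s * (2 - |t|)) : ℂ) =
      (Complex.exp (2*(s:ℂ)) / 2) * Complex.exp ((β - s) * t)
      + (Complex.exp (-(2*(s:ℂ))) / 2) * Complex.exp ((β + s) * t) := by
  rw [abs_of_nonneg ht, Complex.ofReal_cosh,
    show ((s * (2 - t) : ℝ) : ℂ) = (s:ℂ) * (2 - (t:ℝ)) by push_cast; ring]
  exact expand_cosh s β t

lemma green_integral (s : ℝ) (hs : 0 < s) (n : ℤ) :
    (∫ t in (-2:ℝ)..2,
      Complex.exp ((((-((n:ℝ)*π)/2 : ℝ) : ℂ) * Complex.I) * t) * (Real.cosh (s * (2 - |t|)) : ℂ))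
      = ((2 * s * Real.sinh (2*s) / (s^2 + ((n:ℝ) * π / 2)^2) : ℝ) : ℂ) := by
  set β : ℂ := ((-((n:ℝ)*π)/2 : ℝ) : ℂ) * Complex.I with hβ
  have h1 : β - s ≠ 0 := by
    intro h
    have := congrArg Complex.re h
    simp [hβ] at this
    linarith
  have h2 : β + s ≠ 0 := by
    intro h
    have := congrArg Complex.re h
    simp [hβ] at this
    linarith
  have hc : Continuous fun t : ℝ => Complex.exp (β * t) * (Real.cosh (s * (2 - |t|)) : ℂ) := by
    apply (Complex.continuous_exp.comp (continuous_const.mul Complex.continuous_ofReal)).mul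
    exact Complex.continuous_ofReal.comp
      (Real.continuous_cosh.comp (continuous_const.mul (continuous_const.sub continuous_abs)))
  rw [← integral_add_adjacent_intervals (a := (-2:ℝ)) (b := 0) (c := 2)
    (hc.intervalIntegrable _ _) (hc.intervalIntegrable _ _)]
  have e1 : (∫ t in (-2:ℝ)..0, Complex.exp (β * t) * (Real.cosh (s * (2 - |t|)) : ℂ))
      = ∫ t in (-2:ℝ)..0, ((Complex.exp (2*(s:ℂ)) / 2) * Complex.exp ((β + s) * t)
        + (Complex.exp (-(2*(s:ℂ))) / 2) * Complex.exp ((β - s) * t)) := by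
    refine integral_congr fun t ht => ?_
    rw [Set.uIcc_of_le (by norm_num : (-2:ℝ) ≤ 0)] at ht
    exact expand_abs_neg s β t ht.2
  have e2 : (∫ t in (0:ℝ)..2, Complex.exp (β * t) * (Real.cosh (s * (2 - |t|)) : ℂ))
      = ∫ t in (0:ℝ)..2, ((Complex.exp (2*(s:ℂ)) / 2) * Complex.exp ((β - s) * t)
        + (Complex.exp (-(2*(s:ℂ))) / 2) * Complex.exp ((β + s) * t)) := by
    refine integral_congr fun t ht => ?_
    rw [Set.uIcc_of_le (by norm_num : (0:ℝ) ≤ 2)] at ht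
    exact expand_abs_pos s β t ht.1
  have cont1 : ∀ γ : ℂ, Continuous fun t : ℝ => Complex.exp (γ * t) :=
    fun γ => Complex.continuous_exp.comp (continuous_const.mul Complex.continuous_ofReal)
  have int1 : ∀ (γ C : ℂ) (a b : ℝ),
      IntervalIntegrable (fun t : ℝ => C * Complex.exp (γ * t)) MeasureTheory.volume a b :=
    fun γ C a b => (continuous_const.mul (cont1 γ)).intervalIntegrable a b
  rw [e1, e2, integral_add (int1 _ _ _ _) (int1 _ _ _ _), integral_add (int1 _ _ _ _) (int1 _ _ _ _),
    integral_const_mul, integral_const_mul, integral_const_mul, integral_const_mul,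
    integral_exp_mul_complex h1, integral_exp_mul_complex h2,
    integral_exp_mul_complex h1, integral_exp_mul_complex h2]
  -- simplify the exponentials at the endpoints
  have hE4 : Complex.exp (2*β) * Complex.exp (2*β) = 1 := by
    rw [← Complex.exp_add, show (2*β + 2*β : ℂ) = (-n : ℤ) * (2*π*Complex.I) by
      rw [hβ]; push_cast; ring]
    exact Complex.exp_int_mul_two_pi_mul_I _
  have hfix : Complex.exp (-(2*β)) = Complex.exp (2*β) := by
    rw [Complex.exp_neg]; exact inv_eq_of_mul_eq_one_left hE4
  have ha : Complex.exp ((β - s) * (2:ℝ)) = Complex.exp (2*β) * Complex.exp (-(2*(s:ℂ))) := by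
    rw [← Complex.exp_add]; congr 1; push_cast; ring
  have hb : Complex.exp ((β + s) * (2:ℝ)) = Complex.exp (2*β) * Complex.exp (2*(s:ℂ)) := by
    rw [← Complex.exp_add]; congr 1; push_cast; ring
  have hc' : Complex.exp ((β - s) * (-2:ℝ)) = Complex.exp (2*β) * Complex.exp (2*(s:ℂ)) := by
    rw [← hfix, ← Complex.exp_add]; congr 1; push_cast; ring
  have hd : Complex.exp ((β + s) * (-2:ℝ)) = Complex.exp (2*β) * Complex.exp (-(2*(s:ℂ))) := by
    rw [← hfix, ← Complex.exp_add]; congr 1; push_cast; ring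
  have hz : ∀ γ : ℂ, Complex.exp (γ * (0:ℝ)) = 1 := by
    intro γ; rw [Complex.ofReal_zero, mul_zero, Complex.exp_zero]
  rw [ha, hb, hc', hd, hz, hz]
  -- final algebra
  have hprod : (β - s) * (β + s) = -(((s:ℂ)^2 + (((n:ℝ) * π / 2 : ℝ) : ℂ)^2)) := by
    rw [hβ]; push_cast; linear_combination (((n:ℂ) * π / 2)^2) * Complex.I_sq
  have hden : ((s^2 + ((n:ℝ) * π / 2)^2 : ℝ) : ℂ) = -((β - s) * (β + s)) := by
    rw [hprod]; push_cast; ring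
  have hsinh : ((Real.sinh (2*s) : ℝ) : ℂ)
      = (Complex.exp (2*(s:ℂ)) - Complex.exp (-(2*(s:ℂ))))/2 := by
    rw [Complex.ofReal_sinh, ← Complex.two_sinh]; push_cast; ring
  push_cast
  rw [show Complex.sinh (2*(s:ℂ)) = (Complex.exp (2*(s:ℂ)) - Complex.exp (-(2*(s:ℂ))))/2 from
      by rw [← Complex.two_sinh]; ring,
    show ((s:ℂ)^2 + ((n:ℂ) * (π:ℂ) / 2)^2) = -((β - (s:ℂ)) * (β + (s:ℂ))) from by
      have := hden; push_cast at this; exact this]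
  field_simp
  ring


/-- Green function identity for Brownian motion on `(-1,1)` killed at both endpoints. -/
theorem killed_bm_green (α x y : ℝ) (hα : 0 < α) (h1 : -1 ≤ y) (h2 : y ≤ x) (h3 : x ≤ 1) :
    Real.sinh ((1 - x) * Real.sqrt (2 * α)) * Real.sinh ((1 + y) * Real.sqrt (2 * α)) /
        (Real.sqrt (2 * α) * Real.sinh (2 * Real.sqrt (2 * α)))
    = (1 / 2) *
        ∑' n : ℕ, (1 / (α + ((n : ℝ) + 1) ^ 2 * π ^ 2 / 8)) *
          Real.sin (((n : ℝ) + 1) * π * (x + 1) / 2) *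
          Real.sin (((n : ℝ) + 1) * π * (y + 1) / 2) := by
  haveI : Fact (0 < (4:ℝ)) := ⟨by norm_num⟩
  set s : ℝ := Real.sqrt (2 * α) with hsdef
  have hs : 0 < s := Real.sqrt_pos.mpr (by linarith)
  have hs2 : s ^ 2 = 2 * α := Real.sq_sqrt (by linarith)
  have hsinh_pos : 0 < Real.sinh (2 * s) := Real.sinh_pos_iff.mpr (by linarith)
  set g : ℝ → ℂ := fun t => (Real.cosh (s * (2 - |t|)) : ℂ) with hgdef
  have hg_cont : Continuous g :=
    Complex.continuous_ofReal.comp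
      (Real.continuous_cosh.comp (continuous_const.mul (continuous_const.sub continuous_abs)))
  have hg_per : g (-2) = g (-2 + 4) := by norm_num [hgdef]
  set F : C(AddCircle (4:ℝ), ℂ) :=
    ⟨AddCircle.liftIco 4 (-2) g, AddCircle.liftIco_continuous hg_per hg_cont.continuousOn⟩
    with hFdef
  set c : ℤ → ℝ := fun k => s * Real.sinh (2*s) / (2*(s^2 + ((k:ℝ)*π/2)^2)) with hcdef
  -- Fourier coefficients
  have hcoeff : ∀ n : ℤ, fourierCoeff (⇑F) n = ((c n : ℝ) : ℂ) := by
    intro n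
    show fourierCoeff (AddCircle.liftIco 4 (-2) g) n = _
    rw [fourierCoeff_liftIco_eq, fourierCoeffOn_eq_integral]
    rw [intervalIntegral.integral_congr
      (g := fun t : ℝ => Complex.exp ((((-((n:ℝ)*π)/2 : ℝ) : ℂ) * Complex.I) * t)
        * (Real.cosh (s * (2 - |t|)) : ℂ))
      (fun t _ => by rw [fourier_coe_apply, smul_eq_mul]; congr 2; push_cast; ring)]
    rw [show ((-2:ℝ)+4) = 2 by norm_num, show ((2:ℝ) - -2) = 4 by norm_num]
    rw [green_integral s hs n, Complex.real_smul, ← Complex.ofReal_mul]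
    congr 1
    have h : s^2 + ((n:ℝ)*π/2)^2 > 0 := by positivity
    rw [one_div, inv_mul_eq_div, div_div, div_eq_div_iff (by positivity) (by positivity)]
    ring
  -- summability
  have hc_nonneg : ∀ k : ℤ, 0 ≤ c k := by
    intro k
    apply div_nonneg (by positivity)
    positivity
  have hsum : Summable fun k : ℤ => fourierCoeff (⇑F) k := by
    simp_rw [hcoeff]
    apply Summable.of_norm
    have hbound : ∀ k : ℤ, k ≠ 0 → ‖((c k : ℝ) : ℂ)‖ ≤
        (2 * (s * Real.sinh (2*s)) / π^2) * (1 / (k:ℝ)^2) := by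
      intro k hk
      rw [Complex.norm_real, Real.norm_eq_abs, abs_of_nonneg (hc_nonneg k)]
      have hk2 : (1:ℝ) ≤ (k:ℝ)^2 := by
        have : (1:ℝ) ≤ |(k:ℝ)| := by
          rw [← Int.cast_abs]
          exact_mod_cast Int.one_le_abs hk
        nlinarith [sq_abs ((k:ℝ)), this]
      have hq : ((k:ℝ)*π/2)^2 = (k:ℝ)^2 * π^2/4 := by ring
      rw [hcdef]
      have hden : (k:ℝ)^2 * π^2/2 ≤ 2*(s^2 + ((k:ℝ)*π/2)^2) := by
        rw [hq]; nlinarith [sq_nonneg s]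
      rw [div_le_iff₀ (by positivity)]
      have h2 : (2 * (s * Real.sinh (2*s)) / π^2) * (1 / (k:ℝ)^2) * (2*(s^2 + ((k:ℝ)*π/2)^2))
          ≥ (2 * (s * Real.sinh (2*s)) / π^2) * (1 / (k:ℝ)^2) * ((k:ℝ)^2 * π^2/2) := by
        apply mul_le_mul_of_nonneg_left hden
        positivity
      have h3 : (2 * (s * Real.sinh (2*s)) / π^2) * (1 / (k:ℝ)^2) * ((k:ℝ)^2 * π^2/2)
          = s * Real.sinh (2*s) := by
        field_simp
      calc s * Real.sinh (2*s) = _ := h3.symm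
        _ ≤ _ := h2
    apply Summable.of_norm_bounded_eventually
      (g := fun k : ℤ => (2 * (s * Real.sinh (2*s)) / π^2) * (1 / (k:ℝ)^2))
      (((Real.summable_one_div_int_pow (p := 2)).mpr one_lt_two).mul_left _)
    rw [Filter.eventually_cofinite]
    apply Set.Finite.subset (Set.finite_singleton (0:ℤ))
    intro k hk
    simp only [Set.mem_setOf_eq, not_le] at hk
    by_contra hk0
    simp only [Set.mem_singleton_iff] at hk0
    exact absurd (hbound k hk0) (by rw [norm_norm]  at *; exact not_le.mpr hk)
  -- pointwise convergence in real form
  have hterm : ∀ r : ℝ, Complex.exp ((r:ℂ)*Complex.I) + Complex.exp (-((r:ℂ)*Complex.I))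
      = ((2*Real.cos r : ℝ):ℂ) := by
    intro r
    rw [show -((r:ℂ)*Complex.I) = ((-r:ℝ):ℂ)*Complex.I by push_cast; ring,
      Complex.exp_mul_I, Complex.exp_mul_I]
    push_cast
    simp [Real.cos_neg, Real.sin_neg]
    ring
  have hceven : ∀ k : ℕ, c (-(k:ℤ)) = c (k:ℤ) := by
    intro k
    simp only [hcdef]
    push_cast
    ring_nf
  have hpt : ∀ (t : ℝ) (v : ℝ), F ((t : ℝ) : AddCircle (4:ℝ)) = (v : ℂ) →
      HasSum (fun k : ℕ => 2 * c ((k:ℤ)+1) * Real.cos (((k:ℝ)+1)*π*t/2)) (v - c 0) := by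
    intro t v hv
    have h0 := has_pointwise_sum_fourier_series_of_summable hsum (((t : ℝ)) : AddCircle (4:ℝ))
    simp_rw [hcoeff, fourier_coe_apply, smul_eq_mul] at h0
    rw [hv] at h0
    have h0' := h0.nat_add_neg
    have h0'' : HasSum (fun k : ℕ => ((2 * c (k:ℤ) * Real.cos ((k:ℝ)*π*t/2) : ℝ) : ℂ))
        (((v + c 0 : ℝ)) : ℂ) := by
      convert h0' using 1
      · refine funext fun k => ?_
        rw [hceven k]
        rw [show 2*(π:ℂ)*Complex.I*(((k:ℤ)):ℂ)*(t:ℂ)/((4:ℝ):ℂ) = (((k:ℝ)*π*t/2 : ℝ):ℂ)*Complex.I by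
            push_cast; ring,
          show 2*(π:ℂ)*Complex.I*(((-(k:ℤ)):ℤ):ℂ)*(t:ℂ)/((4:ℝ):ℂ) = -((((k:ℝ)*π*t/2 : ℝ):ℂ)*Complex.I) by
            push_cast; ring,
          ← mul_add, hterm]
        push_cast
        ring
      · push_cast
        simp
    have hreal : HasSum (fun k : ℕ => 2 * c (k:ℤ) * Real.cos ((k:ℝ)*π*t/2)) (v + c 0) :=
      Complex.hasSum_ofReal.mp h0''
    have hstrip := (hasSum_nat_add_iff'
      (f := fun k : ℕ => 2 * c (k:ℤ) * Real.cos ((k:ℝ)*π*t/2)) 1).mpr hreal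
    simp only [Finset.range_one, Finset.sum_singleton, Nat.cast_zero, zero_mul, mul_zero,
      zero_div, Real.cos_zero, mul_one] at hstrip
    have hfun : (fun k : ℕ => 2 * c ((k:ℤ)+1) * Real.cos (((k:ℝ)+1)*π*t/2))
        = fun k : ℕ => 2 * c ((k+1 : ℕ):ℤ) * Real.cos (((k+1:ℕ):ℝ)*π*t/2) := by
      refine funext fun k => ?_
      push_cast
      ring_nf
    rw [hfun]
    convert hstrip using 1
    · rfl
    push_cast
    ring_nf
  -- evaluations of F
  have hFeval : ∀ t : ℝ, -2 ≤ t → t < 2 → F ((t : ℝ) : AddCircle (4:ℝ)) = g t := by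
    intro t h h'
    show (AddCircle.liftIco 4 (-2) g) ((t : ℝ) : AddCircle (4:ℝ)) = g t
    exact AddCircle.liftIco_coe_apply ⟨h, by norm_num; linarith⟩
  have hv1 : F (((x - y : ℝ)) : AddCircle (4:ℝ))
      = ((Real.cosh (s*(2-(x-y))) : ℝ) : ℂ) := by
    rcases lt_or_ge (x - y) 2 with h | h
    · rw [hFeval _ (by linarith) h, hgdef]
      simp only
      rw [abs_of_nonneg (by linarith : (0:ℝ) ≤ x - y)]
    · have hxy : x - y = 2 := le_antisymm (by linarith) h
      have hco : (((x-y:ℝ)) : AddCircle (4:ℝ)) = (((-2:ℝ)) : AddCircle (4:ℝ)) := by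
        rw [show (x-y:ℝ) = -2 + 4 by rw [hxy]; norm_num]
        exact AddCircle.coe_add_period 4 (-2)
      rw [hco, hFeval _ le_rfl (by norm_num), hgdef]
      norm_num [hxy]
  have hv2 : F (((x + y + 2 : ℝ)) : AddCircle (4:ℝ))
      = ((Real.cosh (s*(x+y)) : ℝ) : ℂ) := by
    rcases lt_or_ge (x + y + 2) 2 with h | h
    · rw [hFeval _ (by linarith) h, hgdef]
      simp only
      rw [abs_of_nonneg (by linarith : (0:ℝ) ≤ x+y+2),
        show s*(2-(x+y+2)) = -(s*(x+y)) by ring, Real.cosh_neg]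
    · have hco : (((x+y+2:ℝ)) : AddCircle (4:ℝ)) = (((x+y-2:ℝ)) : AddCircle (4:ℝ)) := by
        rw [show (x+y+2:ℝ) = (x+y-2) + 4 by ring]
        exact AddCircle.coe_add_period 4 _
      rw [hco, hFeval _ (by linarith) (by linarith), hgdef]
      simp only
      rw [abs_of_nonpos (by linarith : x+y-2 ≤ 0),
        show s*(2 - -(x+y-2)) = s*(x+y) by ring]
  -- combine
  set v1 : ℝ := Real.cosh (s*(2-(x-y))) with hv1def
  set v2 : ℝ := Real.cosh (s*(x+y)) with hv2def
  have k1 := hpt (x-y) v1 hv1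
  have k2 := hpt (x+y+2) v2 hv2
  have K := k1.sub k2
  have hssinh : s * Real.sinh (2*s) ≠ 0 := by positivity
  have KK : HasSum (fun k : ℕ => (1 / (α + ((k : ℝ) + 1) ^ 2 * π ^ 2 / 8)) *
        Real.sin (((k : ℝ) + 1) * π * (x + 1) / 2) *
        Real.sin (((k : ℝ) + 1) * π * (y + 1) / 2))
      ((v1 - v2) / (s * Real.sinh (2*s))) := by
    have hKdiv := K.div_const (s * Real.sinh (2*s))
    rw [show v1 - c 0 - (v2 - c 0) = v1 - v2 by ring] at hKdiv
    have heq : (fun k : ℕ => (1 / (α + ((k : ℝ) + 1) ^ 2 * π ^ 2 / 8)) *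
        Real.sin (((k : ℝ) + 1) * π * (x + 1) / 2) *
        Real.sin (((k : ℝ) + 1) * π * (y + 1) / 2))
        = fun k : ℕ => (2 * c ((k:ℤ)+1) * Real.cos (((k:ℝ)+1)*π*(x-y)/2)
          - 2 * c ((k:ℤ)+1) * Real.cos (((k:ℝ)+1)*π*(x+y+2)/2)) / (s * Real.sinh (2*s)) := by
      refine funext fun k => ?_
      have hcos : Real.cos (((k:ℝ)+1)*π*(x-y)/2) - Real.cos (((k:ℝ)+1)*π*(x+y+2)/2)
          = 2 * Real.sin (((k:ℝ)+1)*π*(x+1)/2) * Real.sin (((k:ℝ)+1)*π*(y+1)/2) := by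
        rw [Real.cos_sub_cos,
          show (((k:ℝ)+1)*π*(x-y)/2 + ((k:ℝ)+1)*π*(x+y+2)/2)/2 = ((k:ℝ)+1)*π*(x+1)/2 by ring,
          show (((k:ℝ)+1)*π*(x-y)/2 - ((k:ℝ)+1)*π*(x+y+2)/2)/2 = -(((k:ℝ)+1)*π*(y+1)/2) by ring,
          Real.sin_neg]
        ring
      rw [show 2 * c ((k:ℤ)+1) * Real.cos (((k:ℝ)+1)*π*(x-y)/2)
          - 2 * c ((k:ℤ)+1) * Real.cos (((k:ℝ)+1)*π*(x+y+2)/2)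
          = 2 * c ((k:ℤ)+1) * (Real.cos (((k:ℝ)+1)*π*(x-y)/2)
            - Real.cos (((k:ℝ)+1)*π*(x+y+2)/2)) by ring, hcos, hcdef]
      simp only
      push_cast
      rw [hs2]
      have hd1 : (0:ℝ) < 2 * (2*α + (((k:ℝ)+1) * π / 2) ^ 2) := by positivity
      have hd2 : (0:ℝ) < α + ((k:ℝ)+1)^2 * π^2/8 := by positivity
      field_simp
      ring
    rw [heq]
    exact hKdiv
  rw [KK.tsum_eq]
  have hdiff : v1 - v2 = 2 * (Real.sinh ((1-x)*s) * Real.sinh ((1+y)*s)) := by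
    rw [hv1def, hv2def, show s*(2-(x-y)) = (1+y)*s + (1-x)*s by ring,
      show s*(x+y) = (1+y)*s - (1-x)*s by ring, Real.cosh_add, Real.cosh_sub]
    ring
  rw [hdiff]
  field_simp
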